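/- Let σ ∈ O(V) be such that ker(id - σ) is one-dimensional with generator n, and let α ∈ V with ⟨n, α⟩ ≠ 0, with associated reflection s_α. Then id - σ s_α is invertible. -/

import Mathlib

local notation "⟪" x ", " y "⟫_ℝ" => @inner ℝ _ _ x y

noncomputable section

variable {V : Type*} [NormedAddCommGroup V] [InnerProductSpace ℝ V] [FiniteDimensional ℝ V]

/-- The orthogonal reflection in the hyperplane orthogonal to `v`. -/
def hrefl (v : V) : V ≃ₗᵢ[ℝ] V := Submodule.reflection (ℝ ∙ v)ᗮ

/-- Let `σ` be an orthogonal transformation of `V` whose fixed point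
space `ker(id - σ)` is the line spanned by `n ≠ 0`, and let `α` be a nonzero vector
with `⟪n, α⟫ ≠ 0`, with associated reflection `s_α`.  Then `id - σ s_α` is
invertible. -/
theorem isUnit_id_sub_sigma_mul_reflection (σ : V ≃ₗᵢ[ℝ] V) (n : V) (hn : n ≠ 0)
    (hfix : LinearMap.ker ((1 : V →ₗ[ℝ] V) - σ.toLinearEquiv.toLinearMap) = ℝ ∙ n)
    (α : V) (hα : α ≠ 0) (hnα : ⟪n, α⟫_ℝ ≠ 0) :
    IsUnit ((1 : V →ₗ[ℝ] V) - ((hrefl α).trans σ).toLinearEquiv.toLinearMap) := by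
  rw [LinearMap.isUnit_iff_ker_eq_bot, LinearMap.ker_eq_bot']
  intro x hx
  have hx' : x - σ (hrefl α x) = 0 := by simpa using hx
  set y := hrefl α x with hy
  have hxy : x = σ y := by rwa [sub_eq_zero] at hx'
  have hsy : hrefl α y = x := by
    rw [hy]; exact Submodule.reflection_reflection _ x
  -- σ fixes n
  have hσn : σ n = n := by
    have hmem : n ∈ LinearMap.ker ((1 : V →ₗ[ℝ] V) - σ.toLinearEquiv.toLinearMap) := by
      rw [hfix]; exact Submodule.mem_span_singleton_self n
    have := LinearMap.mem_ker.mp hmem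
    simp only [LinearMap.sub_apply, Module.End.one_apply] at this
    rw [sub_eq_zero] at this
    exact this.symm
  have key : ⟪n, y - σ y⟫_ℝ = 0 := by
    have h2 : ⟪n, σ y⟫_ℝ = ⟪n, y⟫_ℝ := by
      nth_rewrite 1 [← hσn]; exact σ.inner_map_map n y
    rw [inner_sub_right, h2]; ring
  have hy_sub : y - σ y = (2 * (⟪α, y⟫_ℝ / ‖α‖ ^ 2)) • α := by
    rw [← hxy, ← hsy]
    show y - Submodule.reflection (ℝ ∙ α)ᗮ y = _
    rw [Submodule.reflection_orthogonal_apply, Submodule.reflection_singleton_apply]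
    push_cast
    rw [two_mul, add_smul]
    abel
  have hαy : ⟪α, y⟫_ℝ = 0 := by
    rw [hy_sub, real_inner_smul_right] at key
    have hα2 : ‖α‖ ≠ 0 := norm_ne_zero_iff.mpr hα
    rcases mul_eq_zero.mp key with h | h
    · field_simp at h; linarith
    · exact absurd h hnα
  have hyx : y = x := by
    rw [← hsy]
    exact (Submodule.reflection_mem_subspace_eq_self
      ((Submodule.mem_orthogonal_singleton_iff_inner_right).mpr hαy)).symm
  have hyfix : y ∈ ℝ ∙ n := by
    rw [← hfix]
    refine LinearMap.mem_ker.mpr ?_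
    simp only [LinearMap.sub_apply, Module.End.one_apply]
    rw [sub_eq_zero]
    show y = σ y
    rw [← hxy, hyx]
  obtain ⟨t, ht⟩ := Submodule.mem_span_singleton.mp hyfix
  have : t * ⟪α, n⟫_ℝ = 0 := by
    rw [← real_inner_smul_right, ht, hαy]
  have ht0 : t = 0 := by
    rcases mul_eq_zero.mp this with h | h
    · exact h
    · exact absurd (real_inner_comm α n ▸ h) hnα
  rw [← hyx, ← ht, ht0, zero_smul]
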